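/- Let m ≥ 2 and define integers s_{j,i} by binomial(km+1, j) = Σ_{i=0}^j s_{j,i}·binomial(k, i) for all k. Then for every i ≥ 1, s_{i+1,i} = i·(m-1)/2 · m^i + m^i; equivalently 2·s_{i+1,i} = i·(m-1)·m^i + 2·m^i. -/

import Mathlib

open Polynomial Finset

private lemma key_expand (m i d : ℕ) :
    ((((X : ℤ[X]) + 1) ^ m - 1) ^ i).coeff d
      = ∑ l ∈ Finset.range (i + 1),
          (-1) ^ (l + i) * (i.choose l : ℤ) * ((l * m).choose d : ℤ) := by
  rw [sub_pow, Polynomial.finset_sum_coeff]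
  refine Finset.sum_congr rfl fun l hl => ?_
  rw [one_pow, mul_one, ← pow_mul, mul_comm m l]
  have hA : ((-1 : ℤ[X]) ^ (l + i)) = Polynomial.C ((-1 : ℤ) ^ (l + i)) := by simp
  have hB : ((i.choose l : ℕ) : ℤ[X]) = Polynomial.C ((i.choose l : ℤ)) := by simp
  rw [hA, hB, mul_right_comm, ← Polynomial.C_mul, Polynomial.coeff_C_mul,
    Polynomial.coeff_X_add_one_pow]

private lemma q_coeff (m a : ℕ) :
    ((((X : ℤ[X]) + 1) ^ m - 1)).coeff a
      = (m.choose a : ℤ) - (if a = 0 then 1 else 0) := by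
  rw [Polynomial.coeff_sub, Polynomial.coeff_X_add_one_pow, Polynomial.coeff_one]

private lemma q_coeff0 (m : ℕ) : ((((X : ℤ[X]) + 1) ^ m - 1)).coeff 0 = 0 := by
  rw [q_coeff]; simp

private lemma q_coeff1 (m : ℕ) : ((((X : ℤ[X]) + 1) ^ m - 1)).coeff 1 = (m : ℤ) := by
  rw [q_coeff]; simp

private lemma q_coeff2 (m : ℕ) :
    ((((X : ℤ[X]) + 1) ^ m - 1)).coeff 2 = (m.choose 2 : ℤ) := by
  rw [q_coeff]; simp

private lemma coeff_vanish (m : ℕ) : ∀ i d : ℕ, d < i →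
    ((((X : ℤ[X]) + 1) ^ m - 1) ^ i).coeff d = 0 := by
  intro i
  induction i with
  | zero => intro d hd; omega
  | succ i ih =>
    intro d hd
    rw [pow_succ', Polynomial.coeff_mul,
      Finset.Nat.sum_antidiagonal_eq_sum_range_succ_mk, Finset.sum_range_succ']
    rw [q_coeff0, zero_mul, add_zero]
    refine Finset.sum_eq_zero fun x hx => ?_
    rw [Finset.mem_range] at hx
    rw [ih (d - (x + 1)) (by omega), mul_zero]

private lemma coeff_diag (m : ℕ) : ∀ i : ℕ,
    ((((X : ℤ[X]) + 1) ^ m - 1) ^ i).coeff i = (m : ℤ) ^ i := by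
  intro i
  induction i with
  | zero => simp
  | succ i ih =>
    rw [pow_succ', Polynomial.coeff_mul,
      Finset.Nat.sum_antidiagonal_eq_sum_range_succ_mk, Finset.sum_range_succ',
      Finset.sum_range_succ']
    rw [q_coeff0, zero_mul, add_zero]
    have hz : ∀ x ∈ Finset.range i,
        ((((X : ℤ[X]) + 1) ^ m - 1)).coeff (x + 1 + 1) *
          ((((X : ℤ[X]) + 1) ^ m - 1) ^ i).coeff (i + 1 - (x + 1 + 1)) = 0 := by
      intro x hx
      rw [Finset.mem_range] at hx
      rw [coeff_vanish m i (i + 1 - (x + 1 + 1)) (by omega), mul_zero]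
    rw [Finset.sum_congr rfl hz, Finset.sum_const_zero, zero_add]
    have : i + 1 - (0 + 1) = i := by omega
    rw [this, q_coeff1, ih, pow_succ]
    ring

private lemma choose_two (m : ℕ) : 2 * (m.choose 2 : ℤ) = (m : ℤ) * ((m : ℤ) - 1) := by
  induction m with
  | zero => simp
  | succ m ih =>
    rw [Nat.choose_succ_succ, Nat.choose_one_right]
    push_cast
    push_cast at ih
    linarith [ih]

private lemma coeff_super (m : ℕ) : ∀ i : ℕ,
    2 * ((((X : ℤ[X]) + 1) ^ m - 1) ^ i).coeff (i + 1)
      = (i : ℤ) * ((m : ℤ) - 1) * (m : ℤ) ^ i := by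
  intro i
  induction i with
  | zero => simp [Polynomial.coeff_one]
  | succ i ih =>
    rw [pow_succ', Polynomial.coeff_mul,
      Finset.Nat.sum_antidiagonal_eq_sum_range_succ_mk, Finset.sum_range_succ',
      Finset.sum_range_succ', Finset.sum_range_succ']
    rw [q_coeff0, zero_mul, add_zero]
    have hz : ∀ x ∈ Finset.range i,
        ((((X : ℤ[X]) + 1) ^ m - 1)).coeff (x + 1 + 1 + 1) *
          ((((X : ℤ[X]) + 1) ^ m - 1) ^ i).coeff (i + 1 + 1 - (x + 1 + 1 + 1)) = 0 := by
      intro x hx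
      rw [Finset.mem_range] at hx
      rw [coeff_vanish m i _ (by omega), mul_zero]
    rw [Finset.sum_congr rfl hz, Finset.sum_const_zero, zero_add]
    have e1 : i + 1 + 1 - (0 + 1) = i + 1 := by omega
    have e2 : i + 1 + 1 - (0 + 1 + 1) = i := by omega
    rw [e1, e2, q_coeff1, q_coeff2, coeff_diag]
    have hc := choose_two m
    push_cast
    linear_combination (m : ℤ) * ih + (m : ℤ) ^ i * hc

private lemma ortho (i d : ℕ) :
    (∑ l ∈ Finset.range (i + 1),
        (-1) ^ (l + i) * (i.choose l : ℤ) * ((l * 1).choose d : ℤ))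
      = if d = i then 1 else 0 := by
  rw [← key_expand 1 i d]
  simp [Polynomial.coeff_X_pow]

theorem stmt_5 (m : ℕ) (hm : 2 ≤ m) (s : ℕ → ℕ → ℤ)
    (hs : ∀ j k : ℕ, ((k * m + 1).choose j : ℤ) =
      ∑ i ∈ Finset.range (j + 1), s j i * (k.choose i : ℤ))
    (i : ℕ) (hi : 1 ≤ i) :
    2 * s (i + 1) i = (i : ℤ) * ((m : ℤ) - 1) * (m : ℤ) ^ i + 2 * (m : ℤ) ^ i := by
  have hS : s (i + 1) i = ∑ l ∈ Finset.range (i + 1),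
      (-1) ^ (l + i) * (i.choose l : ℤ) * (((l * m + 1).choose (i + 1)) : ℤ) := by
    have h1 : ∀ l : ℕ, (((l * m + 1).choose (i + 1)) : ℤ)
        = ∑ i' ∈ Finset.range (i + 2), s (i + 1) i' * (l.choose i' : ℤ) := fun l => hs (i + 1) l
    calc s (i + 1) i
        = ∑ i' ∈ Finset.range (i + 2), s (i + 1) i' * (if i' = i then 1 else 0) := by
          rw [Finset.sum_eq_single i]
          · simp
          · intro b _ hb; simp [hb]
          · intro h; exact absurd (Finset.mem_range.mpr (by omega)) h
      _ = ∑ i' ∈ Finset.range (i + 2), s (i + 1) i' *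
            (∑ l ∈ Finset.range (i + 1),
              (-1) ^ (l + i) * (i.choose l : ℤ) * ((l * 1).choose i' : ℤ)) := by
          refine Finset.sum_congr rfl fun i' _ => ?_
          rw [ortho i i']
      _ = ∑ l ∈ Finset.range (i + 1), (-1) ^ (l + i) * (i.choose l : ℤ) *
            (∑ i' ∈ Finset.range (i + 2), s (i + 1) i' * (l.choose i' : ℤ)) := by
          simp_rw [Finset.mul_sum]
          rw [Finset.sum_comm]
          refine Finset.sum_congr rfl fun l _ => ?_
          refine Finset.sum_congr rfl fun i' _ => ?_
          rw [mul_one l]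
          ring
      _ = _ := by
          refine Finset.sum_congr rfl fun l _ => ?_
          rw [← h1 l]
  have hsplit : ∀ l : ℕ, (((l * m + 1).choose (i + 1)) : ℤ)
      = ((l * m).choose i : ℤ) + ((l * m).choose (i + 1) : ℤ) := by
    intro l
    rw [Nat.choose_succ_succ]
    push_cast
    ring
  rw [hS]
  have hkey : (∑ l ∈ Finset.range (i + 1),
      (-1) ^ (l + i) * (i.choose l : ℤ) * (((l * m + 1).choose (i + 1)) : ℤ))
      = ((((X : ℤ[X]) + 1) ^ m - 1) ^ i).coeff i
        + ((((X : ℤ[X]) + 1) ^ m - 1) ^ i).coeff (i + 1) := by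
    rw [key_expand, key_expand, ← Finset.sum_add_distrib]
    refine Finset.sum_congr rfl fun l _ => ?_
    rw [hsplit l]
    ring
  rw [hkey, coeff_diag]
  have := coeff_super m i
  linarith [this]
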